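/- Let P be an irreducible stochastic matrix on a finite set S and f : S → ℝ nonconstant, with exponential family P_θ(x,y) = P(x,y)e^{θf(y)}v_θ(y)/(ρ(θ)v_θ(x)) and A(θ) = log ρ(θ). Then the derivative of A satisfies Ȧ(θ) = π_θ(f) = Σ_x π_θ(x) f(x), where π_θ is the stationary distribution of the stochastic matrix P_θ. -/

import Mathlib

/-- For the exponential family of stochastic matrices
`P_θ (x,y) = P x y * exp (θ f y) * v θ y / (ρ θ * v θ x)` with `A θ = log ρ θ`,
the derivative of `A` equals the stationary mean: `Ȧ(θ) = ∑ x, π_θ x * f x`. -/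
theorem stmt_11
    {S : Type*} [Fintype S] [DecidableEq S]
    (P : S → S → ℝ) (f : S → ℝ)
    (hP0 : ∀ x y, 0 ≤ P x y) (hP1 : ∀ x, ∑ y, P x y = 1)
    (hirr : ∀ x y : S, ∃ n : ℕ, 0 < ((Matrix.of P) ^ n) x y)
    (hfnc : ∃ x y : S, f x ≠ f y)
    (ρ : ℝ → ℝ) (v : ℝ → S → ℝ)
    (hρ : ∀ θ, 0 < ρ θ) (hv : ∀ θ x, 0 < v θ x)
    (heig : ∀ θ x, ∑ y, P x y * Real.exp (θ * f y) * v θ y = ρ θ * v θ x)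
    (hρd : Differentiable ℝ ρ)
    (hvd : ∀ x, Differentiable ℝ fun θ => v θ x)
    (pi : ℝ → S → ℝ)
    (hpi0 : ∀ θ x, 0 ≤ pi θ x) (hpi1 : ∀ θ, ∑ x, pi θ x = 1)
    (hpistat : ∀ θ y,
      ∑ x, pi θ x * (P x y * Real.exp (θ * f y) * v θ y / (ρ θ * v θ x)) = pi θ y)
    (θ : ℝ) :
    deriv (fun t => Real.log (ρ t)) θ = ∑ x, pi θ x * f x := by
  have hcne : ρ θ ≠ 0 := (hρ θ).ne'
  set r := deriv ρ θ with hr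
  set w : S → ℝ := fun y => deriv (fun t => v t y) θ with hw
  -- derivative of eigen-equation in θ, per x
  have key : ∀ x, ∑ y, P x y * (Real.exp (θ * f y) * f y * v θ y + Real.exp (θ * f y) * w y)
      = r * v θ x + ρ θ * w x := by
    intro x
    have h1 : HasDerivAt (fun t => ∑ y, P x y * Real.exp (t * f y) * v t y)
        (∑ y, P x y * (Real.exp (θ * f y) * f y * v θ y + Real.exp (θ * f y) * w y)) θ := by
      apply HasDerivAt.fun_sum
      intro y _
      have he : HasDerivAt (fun t => Real.exp (t * f y)) (Real.exp (θ * f y) * f y) θ := by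
        have h := ((hasDerivAt_id θ).mul_const (f y)).exp
        simpa using h
      have hv' : HasDerivAt (fun t => v t y) (w y) θ := ((hvd y) θ).hasDerivAt
      have h2 := (he.fun_mul hv').const_mul (P x y)
      convert h2 using 1
      · rfl
      ext t; ring
    have h2 : HasDerivAt (fun t => ρ t * v t x) (r * v θ x + ρ θ * w x) θ :=
      (hρd θ).hasDerivAt.mul ((hvd x) θ).hasDerivAt
    have hfun : (fun t => ∑ y, P x y * Real.exp (t * f y) * v t y) = fun t => ρ t * v t x := by
      funext t; exact heig t x
    rw [hfun] at h1
    exact h1.unique h2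
  -- double sum identity
  have L : ∑ x, ∑ y, pi θ x * (P x y * Real.exp (θ * f y) * v θ y / (ρ θ * v θ x))
        * (f y + w y / v θ y)
      = ∑ y, pi θ y * (f y + w y / v θ y) := by
    rw [Finset.sum_comm]
    refine Finset.sum_congr rfl fun y _ => ?_
    rw [← Finset.sum_mul, hpistat θ y]
  have R : ∑ x, ∑ y, pi θ x * (P x y * Real.exp (θ * f y) * v θ y / (ρ θ * v θ x))
        * (f y + w y / v θ y)
      = r / ρ θ + ∑ x, pi θ x * (w x / v θ x) := by
    have step : ∀ x, ∑ y, pi θ x * (P x y * Real.exp (θ * f y) * v θ y / (ρ θ * v θ x))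
          * (f y + w y / v θ y)
        = pi θ x * (r / ρ θ + w x / v θ x) := by
      intro x
      have hvx : v θ x ≠ 0 := (hv θ x).ne'
      have : ∑ y, pi θ x * (P x y * Real.exp (θ * f y) * v θ y / (ρ θ * v θ x))
            * (f y + w y / v θ y)
          = (pi θ x / (ρ θ * v θ x)) *
            ∑ y, P x y * (Real.exp (θ * f y) * f y * v θ y + Real.exp (θ * f y) * w y) := by
        rw [Finset.mul_sum]
        refine Finset.sum_congr rfl fun y _ => ?_
        have hvy : v θ y ≠ 0 := (hv θ y).ne'
        field_simp
      rw [this, key x]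
      field_simp
      try ring
      try exact Or.inl trivial
    calc ∑ x, ∑ y, pi θ x * (P x y * Real.exp (θ * f y) * v θ y / (ρ θ * v θ x))
          * (f y + w y / v θ y)
        = ∑ x, pi θ x * (r / ρ θ + w x / v θ x) := Finset.sum_congr rfl fun x _ => step x
      _ = (∑ x, pi θ x) * (r / ρ θ) + ∑ x, pi θ x * (w x / v θ x) := by
          rw [Finset.sum_mul]
          rw [← Finset.sum_add_distrib]
          exact Finset.sum_congr rfl fun x _ => by ring
      _ = r / ρ θ + ∑ x, pi θ x * (w x / v θ x) := by rw [hpi1 θ, one_mul]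
  have main : ∑ x, pi θ x * f x = r / ρ θ := by
    have hLR := L.symm.trans R
    have expand : ∑ y, pi θ y * (f y + w y / v θ y)
        = ∑ y, pi θ y * f y + ∑ y, pi θ y * (w y / v θ y) := by
      rw [← Finset.sum_add_distrib]
      exact Finset.sum_congr rfl fun y _ => by ring
    rw [expand] at hLR
    linarith
  have hlog : HasDerivAt (fun t => Real.log (ρ t)) (r / ρ θ) θ :=
    ((hρd θ).hasDerivAt).log hcne
  rw [hlog.deriv, ← main]
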